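/- The element of minimum norm of the set cl(dom f − dom g) ∩ cl(dom f* + dom g*) equals v_P + v_D; that is, P_{cl(dom f − dom g) ∩ cl(dom f* + dom g*)}(0) = v_P + v_D. (By a known characterization, this element of minimum norm equals the minimal displacement vector v of the Douglas–Rachford operator for f and g; hence v = v_P + v_D.) -/

import Mathlib

open scoped InnerProductSpace Pointwise Classical
open Filter Topology

noncomputable section

variable {H : Type*} [NormedAddCommGroup H] [InnerProductSpace ℝ H]

/-- The effective domain of an extended-real-valued function. -/
def fdom {α : Type*} (f : α → EReal) : Set α := {x | f x ≠ ⊤}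

/-- The Fenchel conjugate `f*(u) = sup_x (⟪x, u⟫ - f x)`. -/
def fconj (f : H → EReal) : H → EReal :=
  fun u => ⨆ x : H, ((⟪x, u⟫_ℝ : ℝ) : EReal) - f x

/-- The recession function `(rec f)(y) = sup_{x ∈ dom f} (f (x + y) - f x)`. -/
def recFn (f : H → EReal) : H → EReal :=
  fun y => ⨆ x ∈ fdom f, (f (x + y) - f x)

/-- A proper function: never `-∞` and not identically `+∞`. -/
def ProperFn {α : Type*} (f : α → EReal) : Prop := (∀ x, f x ≠ ⊥) ∧ ∃ x, f x ≠ ⊤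

/-- Convexity of an extended-real-valued function, via convexity of its epigraph. -/
def ConvexFn (f : H → EReal) : Prop :=
  Convex ℝ {p : H × ℝ | f p.1 ≤ (p.2 : EReal)}

/-- `v` is the element of minimum norm of `S`, i.e. `v = P_S 0`, the metric
projection of `0` onto `S`. -/
def IsMinNormPoint (S : Set H) (v : H) : Prop := v ∈ S ∧ ∀ w ∈ S, ‖v‖ ≤ ‖w‖

/-- `p` is the metric projection of `x` onto `S`, i.e. `p = P_S x`. -/
def IsProjOn (S : Set H) (x p : H) : Prop := p ∈ S ∧ ∀ w ∈ S, dist x p ≤ dist x w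

/-- The polar cone `S° = {u | ∀ x ∈ S, ⟪x, u⟫ ≤ 0}`. -/
def polarCone (s : Set H) : Set H := {u | ∀ x ∈ s, ⟪x, u⟫_ℝ ≤ 0}

/-- The recession cone `rec S = {x | ∀ y ∈ S, x + y ∈ S}`. -/
def recCone (s : Set H) : Set H := {x | ∀ y ∈ s, x + y ∈ s}

/-- `p = prox_f w`: `p` minimizes `y ↦ f y + ½‖y - w‖²`. -/
def IsProxOf (f : H → EReal) (w p : H) : Prop :=
  ∀ y : H, f p + ((1 / 2 * ‖p - w‖ ^ 2 : ℝ) : EReal) ≤ f y + ((1 / 2 * ‖y - w‖ ^ 2 : ℝ) : EReal)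

-- a real representation of a finite value
lemma fin_repr {x : EReal} (hb : x ≠ ⊥) (ht : x ≠ ⊤) : ∃ r : ℝ, x = (r : EReal) :=
  ⟨x.toReal, (EReal.coe_toReal ht hb).symm⟩

lemma fconj_le_iff {f : H → EReal} {z : H} {c : EReal} :
    fconj f z ≤ c ↔ ∀ x : H, ((⟪x, z⟫_ℝ : ℝ) : EReal) - f x ≤ c := iSup_le_iff

lemma le_fconj {f : H → EReal} (z x : H) :
    ((⟪x, z⟫_ℝ : ℝ) : EReal) - f x ≤ fconj f z := le_iSup (fun x => ((⟪x, z⟫_ℝ : ℝ) : EReal) - f x) x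

lemma fconj_ne_bot {f : H → EReal} (hf : ProperFn f) (z : H) : fconj f z ≠ ⊥ := by
  obtain ⟨x₀, hx₀⟩ := hf.2
  obtain ⟨r, hr⟩ := fin_repr (hf.1 x₀) hx₀
  have h := le_fconj (f := f) z x₀
  rw [hr] at h
  rw [← EReal.coe_sub] at h
  intro hbot
  rw [hbot, le_bot_iff] at h
  exact EReal.coe_ne_bot _ h

lemma lemA {f : H → EReal} (hf : ProperFn f) {u : H} {M : ℝ}
    (hM : ∀ x ∈ fdom f, ⟪x, u⟫_ℝ ≤ M) {z : H} (hz : z ∈ fdom (fconj f)) :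
    z + u ∈ fdom (fconj f) := by
  have hle : fconj f (z + u) ≤ fconj f z + (M : EReal) := by
    rw [fconj_le_iff]
    intro x
    by_cases hx : f x = ⊤
    · rw [hx, EReal.sub_top]; exact bot_le
    · obtain ⟨r, hr⟩ := fin_repr (hf.1 x) hx
      have h1 : ((⟪x, z⟫_ℝ - r : ℝ) : EReal) ≤ fconj f z := by
        have h := le_fconj (f := f) z x; rwa [hr, ← EReal.coe_sub] at h
      have h2 : (⟪x, z + u⟫_ℝ - r : ℝ) = (⟪x, z⟫_ℝ - r) + ⟪x, u⟫_ℝ := by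
        rw [inner_add_right]; ring
      rw [hr, ← EReal.coe_sub, h2, EReal.coe_add]
      exact add_le_add h1 (EReal.coe_le_coe_iff.2 (hM x hx))
  have hlt : fconj f z + (M : EReal) < ⊤ := EReal.add_lt_top hz (EReal.coe_ne_top M)
  exact (hle.trans_lt hlt).ne

lemma epi_closed {f : H → EReal} (hf : LowerSemicontinuous f) :
    IsClosed {p : H × ℝ | f p.1 ≤ (p.2 : EReal)} := by
  have h1 : IsClosed {q : H × EReal | f q.1 ≤ q.2} := hf.isClosed_epigraph
  have h2 : {p : H × ℝ | f p.1 ≤ (p.2 : EReal)}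
      = (fun p : H × ℝ => (p.1, (p.2 : EReal))) ⁻¹' {q : H × EReal | f q.1 ≤ q.2} := rfl
  rw [h2]
  exact h1.preimage (continuous_fst.prodMk (continuous_coe_real_ereal.comp continuous_snd))

lemma sep [FiniteDimensional ℝ H] {f : H → EReal} (hf_lsc : LowerSemicontinuous f)
    (hf_cvx : ConvexFn f) {x₀ : H} {r₀ : ℝ} (h : ¬ f x₀ ≤ (r₀ : EReal)) :
    ∃ (z : H) (s c : ℝ), (∀ (w : H) (r : ℝ), f w ≤ (r : EReal) → ⟪w, z⟫_ℝ + s * r < c)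
      ∧ c < ⟪x₀, z⟫_ℝ + s * r₀ := by
  obtain ⟨φ, c, hsep, hpt⟩ := geometric_hahn_banach_closed_point
    (hf_cvx) (epi_closed hf_lsc) (show (x₀, r₀) ∉ _ from h)
  set z := (InnerProductSpace.toDual ℝ H).symm (φ.comp (ContinuousLinearMap.inl ℝ H ℝ)) with hz
  have hφ : ∀ w r, φ (w, r) = ⟪w, z⟫_ℝ + r * φ (0, 1) := by
    intro w r
    have h1 : ⟪w, z⟫_ℝ = φ (w, 0) := by
      rw [hz, real_inner_comm, InnerProductSpace.toDual_symm_apply]; rfl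
    have h2 : (w, r) = (w, (0:ℝ)) + r • ((0:H), (1:ℝ)) := by simp [Prod.ext_iff]
    rw [h1, h2, map_add, map_smul]; simp [smul_eq_mul]
  refine ⟨z, φ (0, 1), c, ?_, ?_⟩
  · intro w r hw
    have := hsep (w, r) hw
    rwa [hφ w r, mul_comm] at this
  · have := hpt
    rwa [hφ x₀ r₀, mul_comm] at this

lemma slope_nonpos {f : H → EReal} {z : H} {s c : ℝ}
    (hsep : ∀ (w : H) (r : ℝ), f w ≤ (r : EReal) → ⟪w, z⟫_ℝ + s * r < c)
    {x₁ : H} {r₁ : ℝ} (hx₁ : f x₁ = (r₁ : EReal)) : s ≤ 0 := by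
  by_contra hs
  push_neg at hs
  set t := max r₁ ((c - ⟪x₁, z⟫_ℝ) / s) with ht
  have h1 : f x₁ ≤ (t : EReal) := by
    rw [hx₁]; exact EReal.coe_le_coe_iff.2 (le_max_left _ _)
  have h2 := hsep x₁ t h1
  have h3 : (c - ⟪x₁, z⟫_ℝ) / s ≤ t := le_max_right _ _
  rw [div_le_iff₀ hs] at h3
  nlinarith

lemma conj_dom_of_sep {f : H → EReal} {z : H} {s c : ℝ} (hs : s < 0)
    (hsep : ∀ (w : H) (r : ℝ), f w ≤ (r : EReal) → ⟪w, z⟫_ℝ + s * r < c)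
    (hfbot : ∀ x, f x ≠ ⊥) :
    fconj f ((-s)⁻¹ • z) ≤ ((c * (-s)⁻¹ : ℝ) : EReal) := by
  rw [fconj_le_iff]
  intro x
  by_cases hx : f x = ⊤
  · rw [hx, EReal.sub_top]; exact bot_le
  · obtain ⟨r, hr⟩ := fin_repr (hfbot x) hx
    rw [hr, ← EReal.coe_sub]
    refine EReal.coe_le_coe_iff.2 ?_
    have h2 := hsep x r (le_of_eq hr)
    have h3 : ⟪x, (-s)⁻¹ • z⟫_ℝ = (-s)⁻¹ * ⟪x, z⟫_ℝ := by
      rw [real_inner_smul_right]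
    have hspos : (0:ℝ) < -s := by linarith
    rw [h3]
    have hinv : (-s)⁻¹ * (-s) = 1 := inv_mul_cancel₀ hspos.ne'
    have hmul : (-s)⁻¹ * (⟪x, z⟫_ℝ + s * r) < (-s)⁻¹ * c :=
      mul_lt_mul_of_pos_left h2 (inv_pos.2 hspos)
    have h9 : (-s)⁻¹ * (s * r) = -r := by field_simp [mul_comm]; rw [mul_div_cancel_left₀ r hs.ne]
    rw [mul_add, h9] at hmul
    linarith [hmul, mul_comm c (-s)⁻¹]

lemma lemC [FiniteDimensional ℝ H] {f : H → EReal} (hf_prop : ProperFn f)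
    (hf_lsc : LowerSemicontinuous f) (hf_cvx : ConvexFn f) :
    ∃ z : H, z ∈ fdom (fconj f) := by
  obtain ⟨x₀, hx₀⟩ := hf_prop.2
  obtain ⟨r₁, hr₁⟩ := fin_repr (hf_prop.1 x₀) hx₀
  have hnot : ¬ f x₀ ≤ ((r₁ - 1 : ℝ) : EReal) := by
    rw [hr₁]; intro hle; rw [EReal.coe_le_coe_iff] at hle; linarith
  obtain ⟨z, s, c, hsep, hpt⟩ := sep hf_lsc hf_cvx hnot
  have hs0 : s ≤ 0 := slope_nonpos hsep hr₁
  have hs : s < 0 := by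
    rcases lt_or_eq_of_le hs0 with h | h
    · exact h
    · exfalso
      have h1 := hsep x₀ r₁ (le_of_eq hr₁)
      rw [h] at hpt h1
      simp only [zero_mul, add_zero] at hpt h1
      linarith
  refine ⟨(-s)⁻¹ • z, ?_⟩
  have := conj_dom_of_sep hs hsep hf_prop.1
  exact (this.trans_lt (EReal.coe_lt_top _)).ne

lemma lemB [FiniteDimensional ℝ H] {f : H → EReal} (hf_prop : ProperFn f)
    (hf_lsc : LowerSemicontinuous f) (hf_cvx : ConvexFn f) {u : H} {M : ℝ}
    (hM : ∀ z ∈ fdom (fconj f), ⟪z, u⟫_ℝ ≤ M) {x : H} (hx : x ∈ fdom f) :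
    x + u ∈ fdom f := by
  by_contra htop
  have htop' : f (x + u) = ⊤ := not_not.mp htop
  obtain ⟨r₁, hr₁⟩ := fin_repr (hf_prop.1 x) hx
  set r₀ : ℝ := r₁ + M + 1 with hr₀
  have hnot : ¬ f (x + u) ≤ (r₀ : EReal) := by
    rw [htop']; simp
  obtain ⟨z, s, c, hsep, hpt⟩ := sep hf_lsc hf_cvx hnot
  have hs0 : s ≤ 0 := slope_nonpos hsep hr₁
  rcases lt_or_eq_of_le hs0 with hs | hs
  · -- s < 0 case
    set z' := (-s)⁻¹ • z with hz'
    have hdom : fconj f z' ≤ ((c * (-s)⁻¹ : ℝ) : EReal) := conj_dom_of_sep hs hsep hf_prop.1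
    have hz'dom : z' ∈ fdom (fconj f) := (hdom.trans_lt (EReal.coe_lt_top _)).ne
    have hMz' : ⟪z', u⟫_ℝ ≤ M := hM z' hz'dom
    -- lower bound on fconj f z' from x
    have hlow : ((⟪x, z'⟫_ℝ - r₁ : ℝ) : EReal) ≤ fconj f z' := by
      have h := le_fconj (f := f) z' x; rwa [hr₁, ← EReal.coe_sub] at h
    have hreal : ⟪x, z'⟫_ℝ - r₁ ≤ c * (-s)⁻¹ :=
      EReal.coe_le_coe_iff.1 (hlow.trans hdom)
    -- other side : c < ⟪x+u, z⟫ + s * r₀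
    have hspos : (0:ℝ) < -s := by linarith
    have h4 : c * (-s)⁻¹ < ⟪x + u, z'⟫_ℝ - r₀ := by
      have h5 : ⟪x + u, z'⟫_ℝ = (-s)⁻¹ * ⟪x + u, z⟫_ℝ := real_inner_smul_right _ _ _
      rw [h5]
      have hinv : (-s)⁻¹ * (-s) = 1 := inv_mul_cancel₀ hspos.ne'
      have hmul : (-s)⁻¹ * c < (-s)⁻¹ * (⟪x + u, z⟫_ℝ + s * r₀) :=
        mul_lt_mul_of_pos_left hpt (inv_pos.2 hspos)
      have h9 : (-s)⁻¹ * (s * r₀) = -r₀ := by field_simp [mul_comm]; rw [mul_div_cancel_left₀ r₀ hs.ne]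
      rw [mul_add, h9] at hmul
      linarith [hmul, mul_comm c (-s)⁻¹]
    have h6 : ⟪x + u, z'⟫_ℝ = ⟪x, z'⟫_ℝ + ⟪u, z'⟫_ℝ := inner_add_left _ _ _
    have h7 : ⟪u, z'⟫_ℝ = ⟪z', u⟫_ℝ := real_inner_comm _ _
    nlinarith [hreal, h4]
  · -- s = 0 case
    exfalso
    subst hs
    obtain ⟨z₀, hz₀⟩ := lemC hf_prop hf_lsc hf_cvx
    simp only [zero_mul, add_zero] at hsep hpt
    -- bound on dom f : ⟪w, z⟫ < c
    have hbar : ∀ w ∈ fdom f, ⟪w, z⟫_ℝ ≤ c := by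
      intro w hw
      obtain ⟨r, hr⟩ := fin_repr (hf_prop.1 w) hw
      exact (hsep w r (le_of_eq hr)).le
    have hxz : ⟪x, z⟫_ℝ ≤ c := hbar x hx
    have hpos : 0 < ⟪u, z⟫_ℝ := by
      have : ⟪x + u, z⟫_ℝ = ⟪x, z⟫_ℝ + ⟪u, z⟫_ℝ := inner_add_left _ _ _
      linarith [hpt, hxz, this]
    -- z₀ + t • z ∈ dom fconj for all t ≥ 0
    have hline : ∀ t : ℝ, 0 ≤ t → z₀ + t • z ∈ fdom (fconj f) := by
      intro t ht
      refine lemA hf_prop (M := t * c) ?_ hz₀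
      intro w hw
      rw [real_inner_smul_right]
      exact mul_le_mul_of_nonneg_left (hbar w hw) ht
    -- contradiction with hM
    have hcomm : ⟪z, u⟫_ℝ = ⟪u, z⟫_ℝ := real_inner_comm _ _
    have ht0 : (0:ℝ) ≤ max 0 ((M - ⟪z₀, u⟫_ℝ + 1) / ⟪u, z⟫_ℝ) := le_max_left _ _
    have hmem := hline _ ht0
    have hbnd := hM _ hmem
    rw [inner_add_left, real_inner_smul_left] at hbnd
    have h8 : (M - ⟪z₀, u⟫_ℝ + 1) / ⟪u, z⟫_ℝ ≤ max 0 ((M - ⟪z₀, u⟫_ℝ + 1) / ⟪u, z⟫_ℝ) :=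
      le_max_right _ _
    have h9 : M - ⟪z₀, u⟫_ℝ + 1 ≤ max 0 ((M - ⟪z₀, u⟫_ℝ + 1) / ⟪u, z⟫_ℝ) * ⟪u, z⟫_ℝ :=
      (div_le_iff₀ hpos).1 h8
    nlinarith [mul_le_mul_of_nonneg_left (le_of_eq hcomm) ht0]

lemma tiny {a b : ℝ} (hb : 0 ≤ b) (h : ∀ t : ℝ, 0 < t → t ≤ 1 → 0 ≤ a + t * b) : 0 ≤ a := by
  by_contra hneg
  push_neg at hneg
  have htpos : 0 < min 1 ((-a) / (2 * (b + 1))) :=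
    lt_min one_pos (div_pos (by linarith) (by linarith))
  have h2 := h _ htpos (min_le_left _ _)
  have h3 : min 1 ((-a) / (2 * (b + 1))) ≤ (-a) / (2 * (b + 1)) := min_le_right _ _
  have h4 : min 1 ((-a) / (2 * (b + 1))) * b ≤ (-a) / (2 * (b + 1)) * b :=
    mul_le_mul_of_nonneg_right h3 hb
  have h5 : (-a) / (2 * (b + 1)) * b < -a := by
    rw [div_mul_eq_mul_div, div_lt_iff₀ (by linarith)]
    nlinarith
  linarith

lemma step_div {a b t : ℝ} (htpos : 0 < t) (h : 0 ≤ 2 * (t * a) + t ^ 2 * b) :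
    0 ≤ 2 * a + t * b := by nlinarith

lemma minnorm_inner {K : Set H} (hK : Convex ℝ K) {v : H} (hv : IsMinNormPoint K v) :
    ∀ w ∈ K, ‖v‖ ^ 2 ≤ ⟪w, v⟫_ℝ := by
  intro w hw
  have key : 0 ≤ 2 * ⟪v, w - v⟫_ℝ := by
    refine tiny (b := ‖w - v‖ ^ 2) (by positivity) ?_
    intro t htpos ht1
    have hmem : v + t • (w - v) ∈ K := by
      have h := hK hv.1 hw (by linarith : (0:ℝ) ≤ 1 - t) htpos.le (by ring)
      have heq : (1 - t) • v + t • w = v + t • (w - v) := by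
        rw [smul_sub, sub_smul, one_smul]; abel
      rwa [heq] at h
    have hnorm := hv.2 _ hmem
    have hsq : ‖v‖ ^ 2 ≤ ‖v + t • (w - v)‖ ^ 2 := by
      have := pow_le_pow_left₀ (norm_nonneg v) hnorm 2
      exact this
    rw [norm_add_sq_real, real_inner_smul_right, norm_smul] at hsq
    have hns : ‖t • (w - v)‖ ^ 2 = t ^ 2 * ‖w - v‖ ^ 2 := by
      rw [norm_smul, mul_pow, Real.norm_eq_abs, sq_abs]
    have h6 : 0 ≤ 2 * (t * ⟪v, w - v⟫_ℝ) + t ^ 2 * ‖w - v‖ ^ 2 := by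
      rw [mul_pow, Real.norm_eq_abs, sq_abs] at hsq
      linarith
    exact step_div htpos h6
  have h7 : ⟪v, w - v⟫_ℝ = ⟪v, w⟫_ℝ - ‖v‖ ^ 2 := by
    rw [inner_sub_right, real_inner_self_eq_norm_sq]
  rw [real_inner_comm]
  linarith [key, h7.symm.le]

lemma orth_of_line {S : Set H} {v u : H} (hv : IsMinNormPoint S v)
    (hline : ∀ t : ℝ, v + t • u ∈ S) : ⟪v, u⟫_ℝ = 0 := by
  have key : ∀ t : ℝ, ‖v‖ ^ 2 ≤ ‖v‖ ^ 2 + 2 * (t * ⟪v, u⟫_ℝ) + t ^ 2 * ‖u‖ ^ 2 := by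
    intro t
    have hnorm := hv.2 _ (hline t)
    have hsq : ‖v‖ ^ 2 ≤ ‖v + t • u‖ ^ 2 := pow_le_pow_left₀ (norm_nonneg v) hnorm 2
    rw [norm_add_sq_real, real_inner_smul_right, norm_smul, Real.norm_eq_abs, mul_pow,
      sq_abs] at hsq
    linarith
  have h1 : 0 ≤ 2 * ⟪v, u⟫_ℝ := by
    refine tiny (b := ‖u‖ ^ 2) (by positivity) fun t htpos _ => ?_
    exact step_div htpos (by linarith [key t])
  have h2 : 0 ≤ 2 * (-⟪v, u⟫_ℝ) := by
    refine tiny (b := ‖u‖ ^ 2) (by positivity) fun t htpos _ => ?_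
    refine step_div htpos ?_
    have := key (-t)
    nlinarith [this]
  linarith

lemma proj_char [CompleteSpace H] {K : Set H} (hne : K.Nonempty) (hcl : IsClosed K)
    (hK : Convex ℝ K) (x : H) : ∃ p ∈ K, ∀ w ∈ K, ⟪x - p, w - p⟫_ℝ ≤ 0 := by
  obtain ⟨p, hp, hmin⟩ := exists_norm_eq_iInf_of_complete_convex hne hcl.isComplete hK x
  exact ⟨p, hp, (norm_eq_iInf_iff_real_inner_le_zero hK hp).1 hmin⟩

lemma fdom_convex {f : H → EReal} (hf_prop : ProperFn f) (hf_cvx : ConvexFn f) :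
    Convex ℝ (fdom f) := by
  intro x hx y hy a b ha hb hab
  obtain ⟨r, hr⟩ := fin_repr (hf_prop.1 x) hx
  obtain ⟨q, hq⟩ := fin_repr (hf_prop.1 y) hy
  have hxm : (x, r) ∈ {p : H × ℝ | f p.1 ≤ (p.2 : EReal)} := le_of_eq hr
  have hym : (y, q) ∈ {p : H × ℝ | f p.1 ≤ (p.2 : EReal)} := le_of_eq hq
  have := hf_cvx hxm hym ha hb hab
  simp only [Set.mem_setOf_eq, Prod.smul_mk, Prod.mk_add_mk] at this
  intro htop
  rw [htop] at this
  exact (not_le.2 (EReal.coe_lt_top _)) this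

lemma closure_translate {S : Set H} {w : H} (h : ∀ p ∈ S, p + w ∈ S) :
    ∀ d ∈ closure S, d + w ∈ closure S := by
  intro d hd
  have h1 : d + w ∈ (fun p : H => p + w) '' closure S := ⟨d, hd, rfl⟩
  have h2 : (fun p : H => p + w) '' closure S ⊆ closure ((fun p : H => p + w) '' S) :=
    image_closure_subset_closure_image (continuous_id.add continuous_const)
  have h3 : (fun p : H => p + w) '' S ⊆ S := by
    rintro _ ⟨p, hp, rfl⟩; exact h p hp
  exact closure_mono h3 (h2 h1)

lemma D_translate {f g : H → EReal} (hf_prop : ProperFn f) (hg_prop : ProperFn g)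
    {u : H} {Mf Mg : ℝ}
    (hMf : ∀ x ∈ fdom f, ⟪x, u⟫_ℝ ≤ Mf) (hMg : ∀ y ∈ fdom g, ⟪y, -u⟫_ℝ ≤ Mg) (t : ℝ) :
    ∀ d ∈ closure (fdom (fconj f) + fdom (fconj g)),
      d + t • u ∈ closure (fdom (fconj f) + fdom (fconj g)) := by
  refine closure_translate ?_
  rintro p hp
  rw [Set.mem_add] at hp
  obtain ⟨a, ha, b, hb, rfl⟩ := hp
  rcases le_or_gt 0 t with ht | ht
  · have ha' : a + t • u ∈ fdom (fconj f) := by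
      refine lemA hf_prop (M := t * Mf) ?_ ha
      intro x hx
      rw [real_inner_smul_right]
      exact mul_le_mul_of_nonneg_left (hMf x hx) ht
    rw [Set.mem_add]
    exact ⟨a + t • u, ha', b, hb, by abel⟩
  · have hb' : b + t • u ∈ fdom (fconj g) := by
      refine lemA hg_prop (M := (-t) * Mg) ?_ hb
      intro y hy
      rw [real_inner_smul_right]
      have h1 := hMg y hy
      rw [inner_neg_right] at h1
      nlinarith
    rw [Set.mem_add]
    exact ⟨a, ha, b + t • u, hb', by abel⟩

lemma C_translate [FiniteDimensional ℝ H] {f g : H → EReal}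
    (hf_prop : ProperFn f) (hf_lsc : LowerSemicontinuous f) (hf_cvx : ConvexFn f)
    (hg_prop : ProperFn g) (hg_lsc : LowerSemicontinuous g) (hg_cvx : ConvexFn g)
    {u : H} {Mf Mg : ℝ}
    (hMf : ∀ z ∈ fdom (fconj f), ⟪z, u⟫_ℝ ≤ Mf) (hMg : ∀ z ∈ fdom (fconj g), ⟪z, u⟫_ℝ ≤ Mg)
    (t : ℝ) :
    ∀ c ∈ closure (fdom f - fdom g), c + t • u ∈ closure (fdom f - fdom g) := by
  refine closure_translate ?_
  rintro p hp
  rw [Set.mem_sub] at hp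
  obtain ⟨x, hx, y, hy, rfl⟩ := hp
  rcases le_or_gt 0 t with ht | ht
  · have hx' : x + t • u ∈ fdom f := by
      refine lemB hf_prop hf_lsc hf_cvx (M := t * Mf) ?_ hx
      intro z hz
      rw [real_inner_smul_right]
      exact mul_le_mul_of_nonneg_left (hMf z hz) ht
    rw [Set.mem_sub]
    exact ⟨x + t • u, hx', y, hy, by abel⟩
  · have hy' : y + (-t) • u ∈ fdom g := by
      refine lemB hg_prop hg_lsc hg_cvx (M := (-t) * Mg) ?_ hy
      intro z hz
      rw [real_inner_smul_right]
      exact mul_le_mul_of_nonneg_left (hMg z hz) (by linarith)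
    rw [Set.mem_sub]
    refine ⟨x, hx, y + (-t) • u, hy', ?_⟩
    rw [neg_smul]
    abel

lemma fconj_dom_convex {f : H → EReal} (hf : ProperFn f) : Convex ℝ (fdom (fconj f)) := by
  intro z₁ h₁ z₂ h₂ a b ha hb hab
  have hc₁ : fconj f z₁ ≤ ((fconj f z₁).toReal : EReal) :=
    le_of_eq (EReal.coe_toReal h₁ (fconj_ne_bot hf z₁)).symm
  have hc₂ : fconj f z₂ ≤ ((fconj f z₂).toReal : EReal) :=
    le_of_eq (EReal.coe_toReal h₂ (fconj_ne_bot hf z₂)).symm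
  set c₁ := (fconj f z₁).toReal
  set c₂ := (fconj f z₂).toReal
  have hle : fconj f (a • z₁ + b • z₂) ≤ ((a * c₁ + b * c₂ : ℝ) : EReal) := by
    rw [fconj_le_iff]
    intro x
    by_cases hx : f x = ⊤
    · rw [hx, EReal.sub_top]; exact bot_le
    · obtain ⟨r, hr⟩ := fin_repr (hf.1 x) hx
      rw [hr, ← EReal.coe_sub]
      refine EReal.coe_le_coe_iff.2 ?_
      have e₁ : ⟪x, z₁⟫_ℝ - r ≤ c₁ := by
        refine EReal.coe_le_coe_iff.1 (le_trans ?_ hc₁)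
        have h := le_fconj (f := f) z₁ x; rwa [hr, ← EReal.coe_sub] at h
      have e₂ : ⟪x, z₂⟫_ℝ - r ≤ c₂ := by
        refine EReal.coe_le_coe_iff.1 (le_trans ?_ hc₂)
        have h := le_fconj (f := f) z₂ x; rwa [hr, ← EReal.coe_sub] at h
      have hi : ⟪x, a • z₁ + b • z₂⟫_ℝ = a * ⟪x, z₁⟫_ℝ + b * ⟪x, z₂⟫_ℝ := by
        rw [inner_add_right, real_inner_smul_right, real_inner_smul_right]
      rw [hi]
      have hrr : a * r + b * r = r := by rw [← add_mul, hab, one_mul]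
      nlinarith [mul_le_mul_of_nonneg_left e₁ ha, mul_le_mul_of_nonneg_left e₂ hb, hrr]
  exact (hle.trans_lt (EReal.coe_lt_top _)).ne

theorem minimal_displacement_eq_vP_add_vD {H : Type*} [NormedAddCommGroup H] [InnerProductSpace ℝ H]
    [FiniteDimensional ℝ H]
    (f g : H → EReal)
    (hf_prop : ProperFn f) (hf_lsc : LowerSemicontinuous f) (hf_cvx : ConvexFn f)
    (hg_prop : ProperFn g) (hg_lsc : LowerSemicontinuous g) (hg_cvx : ConvexFn g)
    (vP : H) (hvP : IsMinNormPoint (closure (fdom f - fdom g)) vP)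
    (vD : H) (hvD : IsMinNormPoint (closure (fdom (fconj f) + fdom (fconj g))) vD)
    : IsMinNormPoint (closure (fdom f - fdom g) ∩ closure (fdom (fconj f) + fdom (fconj g)))
      (vP + vD) := by
  obtain ⟨x₀, hx₀⟩ := hf_prop.2
  obtain ⟨y₀, hy₀⟩ := hg_prop.2
  obtain ⟨a₀, ha₀⟩ := lemC hf_prop hf_lsc hf_cvx
  obtain ⟨b₀, hb₀⟩ := lemC hg_prop hg_lsc hg_cvx
  have hCconv : Convex ℝ (closure (fdom f - fdom g)) :=
    ((fdom_convex hf_prop hf_cvx).sub (fdom_convex hg_prop hg_cvx)).closure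
  have hDconv : Convex ℝ (closure (fdom (fconj f) + fdom (fconj g))) :=
    ((fconj_dom_convex hf_prop).add (fconj_dom_convex hg_prop)).closure
  have orthD : ∀ (u : H) (Mf Mg : ℝ), (∀ x ∈ fdom f, ⟪x, u⟫_ℝ ≤ Mf) →
      (∀ y ∈ fdom g, ⟪y, -u⟫_ℝ ≤ Mg) → ⟪vD, u⟫_ℝ = 0 := fun u Mf Mg hMf hMg =>
    orth_of_line hvD (fun t => D_translate hf_prop hg_prop hMf hMg t vD hvD.1)
  have orthC : ∀ (u : H) (Mf Mg : ℝ), (∀ z ∈ fdom (fconj f), ⟪z, u⟫_ℝ ≤ Mf) →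
      (∀ z ∈ fdom (fconj g), ⟪z, u⟫_ℝ ≤ Mg) → ⟪vP, u⟫_ℝ = 0 := fun u Mf Mg hMf hMg =>
    orth_of_line hvP
      (fun t => C_translate hf_prop hf_lsc hf_cvx hg_prop hg_lsc hg_cvx hMf hMg t vP hvP.1)
  have fact1 : ∀ c ∈ closure (fdom f - fdom g), c + vD ∈ closure (fdom f - fdom g) := by
    intro c hc
    obtain ⟨p, hp, hproj⟩ := proj_char ⟨vP, hvP.1⟩ isClosed_closure hCconv (c + vD)
    set q := c + vD - p with hq
    have hbound : ∀ w ∈ closure (fdom f - fdom g), ⟪w, q⟫_ℝ ≤ ⟪p, q⟫_ℝ := by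
      intro w hw
      have h2 : ⟪w - p, q⟫_ℝ ≤ 0 := by rw [real_inner_comm]; exact hproj w hw
      rw [inner_sub_left] at h2; linarith
    have hMf : ∀ x ∈ fdom f, ⟪x, q⟫_ℝ ≤ ⟪p, q⟫_ℝ + ⟪y₀, q⟫_ℝ := by
      intro x hx
      have h3 := hbound _ (subset_closure (Set.sub_mem_sub hx hy₀))
      rw [inner_sub_left] at h3; linarith
    have hMg : ∀ y ∈ fdom g, ⟪y, -q⟫_ℝ ≤ ⟪p, q⟫_ℝ - ⟪x₀, q⟫_ℝ := by
      intro y hy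
      have h3 := hbound _ (subset_closure (Set.sub_mem_sub hx₀ hy))
      rw [inner_sub_left] at h3
      rw [inner_neg_right]; linarith
    have horth : ⟪vD, q⟫_ℝ = 0 := orthD q _ _ hMf hMg
    have hcq : ⟪c, q⟫_ℝ ≤ ⟪p, q⟫_ℝ := hbound c hc
    have hpq : ⟪p, q⟫_ℝ = ⟪c, q⟫_ℝ + ⟪vD, q⟫_ℝ - ‖q‖ ^ 2 := by
      have h4 : p = c + vD - q := by rw [hq]; abel
      rw [h4, inner_sub_left, inner_add_left, real_inner_self_eq_norm_sq]
    have hq0 : q = 0 := by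
      rw [hpq, horth] at hcq
      have h5 : ‖q‖ = 0 := by nlinarith [norm_nonneg q]
      exact norm_eq_zero.1 h5
    have h6 : c + vD = p := by
      rw [hq] at hq0; exact sub_eq_zero.1 hq0
    rw [h6]; exact hp
  have fact2 : ∀ d ∈ closure (fdom (fconj f) + fdom (fconj g)),
      d + vP ∈ closure (fdom (fconj f) + fdom (fconj g)) := by
    intro d hd
    obtain ⟨p, hp, hproj⟩ := proj_char ⟨vD, hvD.1⟩ isClosed_closure hDconv (d + vP)
    set q := d + vP - p with hq
    have hbound : ∀ w ∈ closure (fdom (fconj f) + fdom (fconj g)), ⟪w, q⟫_ℝ ≤ ⟪p, q⟫_ℝ := by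
      intro w hw
      have h2 : ⟪w - p, q⟫_ℝ ≤ 0 := by rw [real_inner_comm]; exact hproj w hw
      rw [inner_sub_left] at h2; linarith
    have hMf : ∀ a ∈ fdom (fconj f), ⟪a, q⟫_ℝ ≤ ⟪p, q⟫_ℝ - ⟪b₀, q⟫_ℝ := by
      intro a ha
      have h3 := hbound _ (subset_closure (Set.add_mem_add ha hb₀))
      rw [inner_add_left] at h3; linarith
    have hMg : ∀ b ∈ fdom (fconj g), ⟪b, q⟫_ℝ ≤ ⟪p, q⟫_ℝ - ⟪a₀, q⟫_ℝ := by
      intro b hb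
      have h3 := hbound _ (subset_closure (Set.add_mem_add ha₀ hb))
      rw [inner_add_left] at h3; linarith
    have horth : ⟪vP, q⟫_ℝ = 0 := orthC q _ _ hMf hMg
    have hcq : ⟪d, q⟫_ℝ ≤ ⟪p, q⟫_ℝ := hbound d hd
    have hpq : ⟪p, q⟫_ℝ = ⟪d, q⟫_ℝ + ⟪vP, q⟫_ℝ - ‖q‖ ^ 2 := by
      have h4 : p = d + vP - q := by rw [hq]; abel
      rw [h4, inner_sub_left, inner_add_left, real_inner_self_eq_norm_sq]
    have hq0 : q = 0 := by
      rw [hpq, horth] at hcq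
      have h5 : ‖q‖ = 0 := by nlinarith [norm_nonneg q]
      exact norm_eq_zero.1 h5
    have h6 : d + vP = p := by
      rw [hq] at hq0; exact sub_eq_zero.1 hq0
    rw [h6]; exact hp
  have horthPD : ⟪vP, vD⟫_ℝ = 0 := by
    have hMf : ∀ x ∈ fdom f, ⟪x, -vP⟫_ℝ ≤ -‖vP‖ ^ 2 - ⟪y₀, vP⟫_ℝ := by
      intro x hx
      have h1 := minnorm_inner hCconv hvP _ (subset_closure (Set.sub_mem_sub hx hy₀))
      rw [inner_sub_left] at h1
      rw [inner_neg_right]; linarith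
    have hMg : ∀ y ∈ fdom g, ⟪y, -(-vP)⟫_ℝ ≤ ⟪x₀, vP⟫_ℝ - ‖vP‖ ^ 2 := by
      intro y hy
      have h1 := minnorm_inner hCconv hvP _ (subset_closure (Set.sub_mem_sub hx₀ hy))
      rw [inner_sub_left] at h1
      rw [neg_neg]; linarith
    have h2 : ⟪vD, -vP⟫_ℝ = 0 := orthD (-vP) _ _ hMf hMg
    rw [inner_neg_right, neg_eq_zero] at h2
    rw [real_inner_comm]; exact h2
  constructor
  · exact ⟨fact1 vP hvP.1, by rw [add_comm vP vD]; exact fact2 vD hvD.1⟩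
  · rintro w ⟨hwC, hwD⟩
    have h1 : ‖vP‖ ^ 2 ≤ ⟪w, vP⟫_ℝ := minnorm_inner hCconv hvP w hwC
    have h2 : ‖vD‖ ^ 2 ≤ ⟪w, vD⟫_ℝ := minnorm_inner hDconv hvD w hwD
    have h3 : ‖vP + vD‖ ^ 2 = ‖vP‖ ^ 2 + ‖vD‖ ^ 2 := by
      rw [norm_add_sq_real, horthPD]; ring
    have h4 : ‖vP + vD‖ ^ 2 ≤ ⟪w, vP + vD⟫_ℝ := by
      rw [inner_add_right, h3]; linarith
    have h5 : ⟪w, vP + vD⟫_ℝ ≤ ‖w‖ * ‖vP + vD‖ := real_inner_le_norm _ _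
    nlinarith [norm_nonneg (vP + vD), norm_nonneg w]


end
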